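/- Let k be a field of characteristic zero, B an integral k-domain, and D a locally nilpotent derivation of B with kernel A. Then A is factorially closed in B: for nonzero f, g ∈ B, if fg ∈ A then f ∈ A and g ∈ A. -/
import Mathlib

open Finset in
/-- Iterated Leibniz rule for a derivation. -/
private lemma iterLeibniz {k B : Type*} [CommRing k] [CommRing B]
    [Algebra k B] (D : Derivation k B B) (f g : B) (j : ℕ) :
    (⇑D)^[j] (f * g)
      = ∑ i ∈ Finset.range (j + 1), j.choose i • ((⇑D)^[i] f * (⇑D)^[j - i] g) := by
  induction j with
  | zero => simp
  | succ j ih =>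
    rw [Function.iterate_succ_apply', ih, map_sum]
    have step : ∀ i ∈ range (j + 1),
        D (j.choose i • ((⇑D)^[i] f * (⇑D)^[j - i] g))
          = j.choose i • ((⇑D)^[i + 1] f * (⇑D)^[j - i] g)
            + j.choose i • ((⇑D)^[i] f * (⇑D)^[j - i + 1] g) := by
      intro i _
      rw [map_nsmul, Derivation.leibniz, smul_eq_mul, smul_eq_mul,
        Function.iterate_succ_apply', Function.iterate_succ_apply', ← smul_add]
      ring_nf
    rw [Finset.sum_congr rfl step, Finset.sum_add_distrib]
    -- Rewrite the RHS by peeling off the first term and applying Pascal's rule.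
    rw [Finset.sum_range_succ' _ (j + 1)]
    have pascal : ∀ i ∈ range (j + 1),
        (j + 1).choose (i + 1) • ((⇑D)^[i + 1] f * (⇑D)^[j + 1 - (i + 1)] g)
          = j.choose i • ((⇑D)^[i + 1] f * (⇑D)^[j - i] g)
            + j.choose (i + 1) • ((⇑D)^[i + 1] f * (⇑D)^[j - i] g) := by
      intro i _
      rw [Nat.choose_succ_succ, add_smul, Nat.succ_sub_succ]
    rw [Finset.sum_congr rfl pascal, Finset.sum_add_distrib]
    have h0 : (j + 1).choose 0 • ((⇑D)^[0] f * (⇑D)^[j + 1 - 0] g)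
        = f * (⇑D)^[j + 1] g := by simp
    rw [h0]
    -- It remains to match the second sums.
    have hB : ∑ i ∈ range (j + 1), j.choose i • ((⇑D)^[i] f * (⇑D)^[j - i + 1] g)
        = (∑ i ∈ range (j + 1), j.choose (i + 1) • ((⇑D)^[i + 1] f * (⇑D)^[j - i] g))
          + f * (⇑D)^[j + 1] g := by
      have : ∑ i ∈ range (j + 2), j.choose i • ((⇑D)^[i] f * (⇑D)^[j + 1 - i] g)
          = (∑ i ∈ range (j + 1), j.choose (i + 1) • ((⇑D)^[i + 1] f * (⇑D)^[j + 1 - (i + 1)] g))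
            + j.choose 0 • ((⇑D)^[0] f * (⇑D)^[j + 1 - 0] g) :=
        Finset.sum_range_succ' _ (j + 1)
      rw [Finset.sum_range_succ, Nat.choose_succ_self, zero_smul, add_zero] at this
      have hcongr : ∀ i ∈ range (j + 1),
          j.choose i • ((⇑D)^[i] f * (⇑D)^[j + 1 - i] g)
            = j.choose i • ((⇑D)^[i] f * (⇑D)^[j - i + 1] g) := by
        intro i hi
        rw [Finset.mem_range] at hi
        rw [Nat.sub_add_comm (by omega)]
      rw [Finset.sum_congr rfl hcongr] at this
      have hcongr2 : ∀ i ∈ range (j + 1),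
          j.choose (i + 1) • ((⇑D)^[i + 1] f * (⇑D)^[j + 1 - (i + 1)] g)
            = j.choose (i + 1) • ((⇑D)^[i + 1] f * (⇑D)^[j - i] g) := by
        intro i _
        rw [Nat.succ_sub_succ]
      rw [Finset.sum_congr rfl hcongr2] at this
      simpa using this
    rw [hB]
    abel

/-- Let `k` be a field of characteristic zero, `B` an integral `k`-domain, and `D` a
locally nilpotent derivation of `B` with kernel `A = {b | D b = 0}`.  Then `A` is
factorially closed in `B`: for nonzero `f, g ∈ B`, if `fg ∈ A` then `f ∈ A` and
`g ∈ A`. -/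
theorem stmt18 {k B : Type*} [Field k] [CharZero k] [CommRing B] [IsDomain B]
    [Algebra k B] (D : Derivation k B B)
    (hLND : ∀ b : B, ∃ n : ℕ, (⇑D)^[n] b = 0) :
    ∀ f g : B, f ≠ 0 → g ≠ 0 → D (f * g) = 0 → D f = 0 ∧ D g = 0 := by
  have : CharZero B :=
    charZero_of_injective_algebraMap (algebraMap k B).injective
  intro f g hf hg hfg
  -- All iterates of D vanish on f*g from the first one on.
  have hiter : ∀ m : ℕ, (⇑D)^[m + 1] (f * g) = 0 := by
    intro m
    induction m with
    | zero => simpa using hfg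
    | succ m ih => rw [Function.iterate_succ_apply', ih, map_zero]
  -- Minimal vanishing indices for f and g.
  obtain ⟨nf, hnf⟩ := hLND f
  obtain ⟨ng, hng⟩ := hLND g
  -- Find minimal such indices.
  classical
  have hef : ∃ n, (⇑D)^[n] f = 0 := ⟨nf, hnf⟩
  have heg : ∃ n, (⇑D)^[n] g = 0 := ⟨ng, hng⟩
  obtain ⟨mf, hmf, hmfmin⟩ : ∃ m, (⇑D)^[m] f = 0 ∧ ∀ i < m, ¬((⇑D)^[i] f = 0) :=
    ⟨Nat.find hef, Nat.find_spec hef, fun i hi => Nat.find_min hef hi⟩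
  obtain ⟨mg, hmg, hmgmin⟩ : ∃ m, (⇑D)^[m] g = 0 ∧ ∀ i < m, ¬((⇑D)^[i] g = 0) :=
    ⟨Nat.find heg, Nat.find_spec heg, fun i hi => Nat.find_min heg hi⟩
  -- mf, mg ≥ 1 since f, g ≠ 0.
  have hmf1 : 1 ≤ mf := by
    rcases Nat.eq_zero_or_pos mf with h | h
    · exact absurd (by simpa [h] using hmf) hf
    · exact h
  have hmg1 : 1 ≤ mg := by
    rcases Nat.eq_zero_or_pos mg with h | h
    · exact absurd (by simpa [h] using hmg) hg
    · exact h
  -- Show mf = 1 and mg = 1, i.e. D f = 0 and D g = 0.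
  by_contra hcon
  -- Then mf + mg ≥ 3, so mf + mg - 2 ≥ 1.
  have hkey : mf + mg - 2 ≥ 1 := by
    rcases Decidable.not_and_iff_or_not.mp hcon with h | h
    · have : 2 ≤ mf := by
        rcases Nat.lt_or_ge mf 2 with h2 | h2
        · interval_cases mf
          exact absurd (by simpa using hmf) h
        · exact h2
      omega
    · have : 2 ≤ mg := by
        rcases Nat.lt_or_ge mg 2 with h2 | h2
        · interval_cases mg
          exact absurd (by simpa using hmg) h
        · exact h2
      omega
  set j := mf + mg - 2 with hj
  have hjf : j - (mf - 1) = mg - 1 := by omega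
  -- Evaluate the iterated Leibniz formula at j.
  have hL := iterLeibniz D f g j
  have hzero : (⇑D)^[j] (f * g) = 0 := by
    obtain ⟨m, hm⟩ : ∃ m, j = m + 1 := ⟨j - 1, by omega⟩
    rw [hm]; exact hiter m
  rw [hzero] at hL
  -- In the sum, all terms vanish except i = mf - 1.
  have hsum : ∀ i ∈ Finset.range (j + 1), i ≠ mf - 1 →
      (j.choose i) • ((⇑D)^[i] f * (⇑D)^[j - i] g) = 0 := by
    intro i _ hi
    rcases Nat.lt_or_ge i mf with h | h
    · -- i < mf and i ≠ mf - 1, so i < mf - 1, hence j - i > mg - 1, i.e. j - i ≥ mg.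
      have : mg ≤ j - i := by omega
      have : (⇑D)^[j - i] g = 0 := by
        obtain ⟨d, hd⟩ : ∃ d, j - i = mg + d := ⟨j - i - mg, by omega⟩
        rw [hd, add_comm, Function.iterate_add_apply, hmg]
        simp [Function.iterate_fixed]
      rw [this, mul_zero, smul_zero]
    · have : (⇑D)^[i] f = 0 := by
        obtain ⟨d, hd⟩ : ∃ d, i = mf + d := ⟨i - mf, by omega⟩
        rw [hd, add_comm, Function.iterate_add_apply, hmf]
        simp [Function.iterate_fixed]
      rw [this, zero_mul, smul_zero]
  have hmem : mf - 1 ∈ Finset.range (j + 1) := by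
    rw [Finset.mem_range]; omega
  rw [← Finset.sum_subset (Finset.singleton_subset_iff.mpr hmem)
    (fun i hi hni => hsum i hi (by simpa using hni))] at hL
  rw [Finset.sum_singleton, hjf] at hL
  -- The single remaining term is nonzero: contradiction.
  have hchoose : (j.choose (mf - 1) : B) ≠ 0 := by
    have : 0 < j.choose (mf - 1) := Nat.choose_pos (by omega)
    exact_mod_cast this.ne'
  have hf' : (⇑D)^[mf - 1] f ≠ 0 := fun h => absurd h (hmfmin _ (by omega))
  have hg' : (⇑D)^[mg - 1] g ≠ 0 := fun h => absurd h (hmgmin _ (by omega))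
  rw [nsmul_eq_mul] at hL
  exact mul_ne_zero hchoose (mul_ne_zero hf' hg') hL.symm
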